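/- Let α, μ, λ ∈ ℂ with μ + λ ≠ 0, and let n ≥ 1 be a natural number. Then: Σ_{k=0}^n C(n,k) μ^k λ^{n−k} H_k(α) = (μ + λ)^n · ( H_n( (λ + μα)/(μ + λ) ) − H_n( λ/(μ + λ) ) ). -/
import Mathlib


open Finset

/-- The generalized harmonic number `H_n(α) = ∑_{k=1}^n α^k / k`. -/
noncomputable def genHarmonic (α : ℂ) (n : ℕ) : ℂ :=
  ∑ k ∈ Finset.Icc 1 n, α ^ k / (k : ℂ)

lemma genHarmonic_zero (α : ℂ) : genHarmonic α 0 = 0 := by simp [genHarmonic]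

lemma genHarmonic_succ (α : ℂ) (n : ℕ) :
    genHarmonic α (n+1) = genHarmonic α n + α^(n+1)/((n:ℂ)+1) := by
  unfold genHarmonic
  rw [Finset.sum_Icc_succ_top (Nat.le_add_left 1 n)]
  push_cast
  ring

lemma key (x y : ℂ) (n : ℕ) :
    ∑ k ∈ range (n+1), (n.choose k : ℂ) * x^(k+1) * y^(n-k) / ((k:ℂ)+1)
      = ((y + x)^(n+1) - y^(n+1)) / ((n:ℂ)+1) := by
  have hn1 : ((n:ℂ)+1) ≠ 0 := Nat.cast_add_one_ne_zero n
  rw [eq_div_iff hn1, Finset.sum_mul]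
  have expand : (x + y)^(n+1) = ∑ k ∈ range (n+2), x^k * y^(n+1-k) * ((n+1).choose k : ℂ) :=
    add_pow x y (n+1)
  rw [Finset.sum_range_succ'] at expand
  simp only [pow_zero, Nat.choose_zero_right, Nat.cast_one, mul_one, one_mul, Nat.sub_zero] at expand
  have : ∀ k ∈ range (n+1),
      (n.choose k : ℂ) * x^(k+1) * y^(n-k) / ((k:ℂ)+1) * ((n:ℂ)+1)
        = x^(k+1) * y^(n+1-(k+1)) * ((n+1).choose (k+1) : ℂ) := by
    intro k _
    have hc : ((n:ℂ)+1) * (n.choose k : ℂ) = ((n+1).choose (k+1) : ℂ) * ((k:ℂ)+1) := by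
      exact_mod_cast Nat.add_one_mul_choose_eq n k
    have hk1 : ((k:ℂ)+1) ≠ 0 := Nat.cast_add_one_ne_zero k
    have hs : n+1-(k+1) = n-k := Nat.succ_sub_succ n k
    rw [hs]
    field_simp
    linear_combination x^(k+1) * y^(n-k) * hc
  rw [Finset.sum_congr rfl this]
  linear_combination -expand

lemma aux (α mu lam : ℂ) (h : mu + lam ≠ 0) : ∀ n : ℕ,
    ∑ k ∈ Finset.range (n + 1),
        (Nat.choose n k : ℂ) * mu ^ k * lam ^ (n - k) * genHarmonic α k =
      (mu + lam) ^ n *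
        (genHarmonic ((lam + mu * α) / (mu + lam)) n - genHarmonic (lam / (mu + lam)) n) := by
  intro n
  induction n with
  | zero => simp [genHarmonic_zero]
  | succ n ih =>
    have hn1 : ((n:ℂ)+1) ≠ 0 := Nat.cast_add_one_ne_zero n
    -- LHS recurrence
    have hL : ∑ k ∈ Finset.range (n + 2),
        (Nat.choose (n+1) k : ℂ) * mu ^ k * lam ^ (n+1-k) * genHarmonic α k
        = (mu + lam) * (∑ k ∈ Finset.range (n + 1),
            (Nat.choose n k : ℂ) * mu ^ k * lam ^ (n-k) * genHarmonic α k)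
          + ((lam + mu*α)^(n+1) - lam^(n+1)) / ((n:ℂ)+1) := by
      rw [Finset.sum_range_succ']
      simp only [genHarmonic_zero, mul_zero, add_zero]
      have hsplit : ∀ k ∈ range (n + 1),
          (Nat.choose (n+1) (k+1) : ℂ) * mu ^ (k+1) * lam ^ (n+1-(k+1)) * genHarmonic α (k+1)
          = (mu * ((Nat.choose n k : ℂ) * mu ^ k * lam ^ (n-k) * genHarmonic α k)
              + (Nat.choose n k : ℂ) * (mu*α) ^ (k+1) * lam ^ (n-k) / ((k:ℂ)+1))
            + (Nat.choose n (k+1) : ℂ) * mu ^ (k+1) * lam ^ (n-k) * genHarmonic α (k+1) := by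
        intro k _
        have hc : (Nat.choose (n+1) (k+1) : ℂ) = (Nat.choose n k : ℂ) + (Nat.choose n (k+1) : ℂ) := by
          exact_mod_cast congrArg (Nat.cast : ℕ → ℂ) (Nat.choose_succ_succ n k)
        rw [Nat.succ_sub_succ, hc, genHarmonic_succ, mul_pow]
        ring
      rw [Finset.sum_congr rfl hsplit, Finset.sum_add_distrib, Finset.sum_add_distrib]
      have hB : ∑ k ∈ range (n+1), (Nat.choose n k : ℂ) * (mu*α) ^ (k+1) * lam ^ (n-k) / ((k:ℂ)+1)
          = ((lam + mu*α)^(n+1) - lam^(n+1)) / ((n:ℂ)+1) := key (mu*α) lam n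
      have hC : ∑ k ∈ range (n+1),
          (Nat.choose n (k+1) : ℂ) * mu ^ (k+1) * lam ^ (n-k) * genHarmonic α (k+1)
          = lam * ∑ k ∈ range (n+1), (Nat.choose n k : ℂ) * mu ^ k * lam ^ (n-k) * genHarmonic α k := by
        rw [Finset.mul_sum, Finset.sum_range_succ]
        simp only [Nat.choose_succ_self, Nat.cast_zero, zero_mul, add_zero]
        conv_rhs => rw [Finset.sum_range_succ']
        simp only [genHarmonic_zero, mul_zero, add_zero]
        refine Finset.sum_congr rfl ?_
        intro k hk
        have hk' : k + 1 ≤ n := Finset.mem_range.mp hk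
        have : n - k = (n - (k+1)) + 1 := by omega
        rw [this, pow_succ]
        ring
      rw [hB, hC, ← Finset.mul_sum]
      ring
    rw [hL, ih]
    -- RHS recurrence
    rw [genHarmonic_succ, genHarmonic_succ]
    have hA : (mu+lam)^(n+1) * (((lam + mu*α)/(mu+lam))^(n+1)) = (lam + mu*α)^(n+1) := by
      rw [div_pow, ← mul_div_assoc, mul_comm, mul_div_assoc, div_self (pow_ne_zero _ h), mul_one]
    have hBB : (mu+lam)^(n+1) * ((lam/(mu+lam))^(n+1)) = lam^(n+1) := by
      rw [div_pow, ← mul_div_assoc, mul_comm, mul_div_assoc, div_self (pow_ne_zero _ h), mul_one]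
    linear_combination (hBB - hA) / ((n:ℂ)+1)

theorem stmt_8 (α mu lam : ℂ) (h : mu + lam ≠ 0) (n : ℕ) (hn : 1 ≤ n) :
    ∑ k ∈ Finset.range (n + 1),
        (Nat.choose n k : ℂ) * mu ^ k * lam ^ (n - k) * genHarmonic α k =
      (mu + lam) ^ n *
        (genHarmonic ((lam + mu * α) / (mu + lam)) n - genHarmonic (lam / (mu + lam)) n) :=
  aux α mu lam h n
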